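/- For a linear operator T on a vector space X and every n ∈ ℕ₀, the dimension of the quotient (R(T^n) ∩ N(T))/(R(T^{n+1}) ∩ N(T)) equals the dimension of the quotient (R(T) + N(T^{n+1}))/(R(T) + N(T^n)). -/

import Mathlib

/-- `dim ((R(T^n) ⊓ N(T)) / (R(T^{n+1}) ⊓ N(T))) = dim ((R(T) ⊔ N(T^{n+1})) / (R(T) ⊔ N(T^n)))`. -/
theorem kn_two_descriptions
    {K : Type*} [Field K] {X : Type*} [AddCommGroup X] [Module K X]
    (T : Module.End K X) (n : ℕ) :
    Module.rank K
      (↥(LinearMap.range (T ^ n) ⊓ LinearMap.ker T) ⧸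
        (LinearMap.range (T ^ (n + 1)) ⊓ LinearMap.ker T).comap
          (LinearMap.range (T ^ n) ⊓ LinearMap.ker T).subtype) =
    Module.rank K
      (↥(LinearMap.range T ⊔ LinearMap.ker (T ^ (n + 1))) ⧸
        (LinearMap.range T ⊔ LinearMap.ker (T ^ n)).comap
          (LinearMap.range T ⊔ LinearMap.ker (T ^ (n + 1))).subtype) := by
  set p := LinearMap.ker (T ^ (n + 1)) with hp
  set q := LinearMap.range T ⊔ LinearMap.ker (T ^ n) with hq
  set A := LinearMap.range (T ^ n) ⊓ LinearMap.ker T with hA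
  set B := LinearMap.range (T ^ (n + 1)) ⊓ LinearMap.ker T with hB
  have hker_le : LinearMap.ker (T ^ n) ≤ p := by
    intro x hx
    simp only [LinearMap.mem_ker] at hx
    show (T ^ (n + 1)) x = 0
    rw [pow_succ', Module.End.mul_apply, hx, map_zero]
  have hsup : p ⊔ q = LinearMap.range T ⊔ p := by
    rw [hq, sup_comm p, sup_assoc, sup_eq_right.mpr hker_le]
  have hmem : ∀ x : p, (T ^ n) (x : X) ∈ A := by
    rintro ⟨x, hx⟩
    refine ⟨⟨x, rfl⟩, ?_⟩
    have hx' : (T ^ (n + 1)) x = 0 := hx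
    rw [pow_succ', Module.End.mul_apply] at hx'
    exact hx'
  set g : p →ₗ[K] (A ⧸ B.comap A.subtype) :=
    (B.comap A.subtype).mkQ ∘ₗ
      LinearMap.codRestrict A ((T ^ n) ∘ₗ p.subtype) hmem with hg
  have hsurj : Function.Surjective g := by
    intro z
    obtain ⟨⟨y, hyA⟩, rfl⟩ := Submodule.mkQ_surjective _ z
    obtain ⟨⟨x, rfl⟩, hyk⟩ := hyA
    have hxp : x ∈ p := by
      show (T ^ (n + 1)) x = 0
      rw [pow_succ', Module.End.mul_apply]
      exact hyk
    exact ⟨⟨x, hxp⟩, rfl⟩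
  have hkerg : LinearMap.ker g = (p ⊓ q).comap p.subtype := by
    ext ⟨x, hx⟩
    simp only [LinearMap.mem_ker, Submodule.mem_comap, Submodule.mem_inf,
      Submodule.coe_subtype]
    have hgx : g ⟨x, hx⟩ = Submodule.Quotient.mk (⟨(T ^ n) x, hmem ⟨x, hx⟩⟩ : A) := rfl
    rw [hgx, Submodule.Quotient.mk_eq_zero, Submodule.mem_comap]
    simp only [Submodule.coe_subtype, hx, true_and]
    constructor
    · rintro ⟨⟨z, hz⟩, -⟩
      -- hz : (T ^ (n+1)) z = T^n x
      have hsub : x - T z ∈ LinearMap.ker (T ^ n) := by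
        simp only [LinearMap.mem_ker, map_sub]
        have : (T ^ n) (T z) = (T ^ (n + 1)) z := by
          rw [pow_succ, Module.End.mul_apply]
        rw [this, hz, sub_self]
      rw [hq]
      exact Submodule.mem_sup.mpr ⟨T z, ⟨z, rfl⟩, x - T z, hsub, by abel⟩
    · intro hxq
      rw [hq] at hxq
      obtain ⟨u, ⟨y, rfl⟩, w, hw, rfl⟩ := Submodule.mem_sup.mp hxq
      refine ⟨⟨y, ?_⟩, ?_⟩
      · simp only [map_add]
        have h1 : (T ^ n) (T y) = (T ^ (n + 1)) y := by
          rw [pow_succ, Module.End.mul_apply]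
        rw [h1, hw, add_zero]
      · have := hmem ⟨T y + w, hx⟩
        exact this.2
  have e1 := g.quotKerEquivOfSurjective hsurj
  have e2 := LinearMap.quotientInfEquivSupQuotient p q
  rw [← hsup, ← e2.rank_eq, ← Submodule.comap_inf, ← hkerg, e1.rank_eq]
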